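/- Let K be a field and M a finite J-trivial monoid. For each x ∈ M, the one-dimensional K-vector space S_x with basis vector ε_x carries a right module structure over the monoid algebra MonoidAlgebra K M determined by ε_x · y = ε_x if x·y = x and ε_x · y = 0 otherwise, for y ∈ M. Moreover, every simple right module over MonoidAlgebra K M is isomorphic to S_x for some x ∈ M; in particular, every simple module over MonoidAlgebra K M is one-dimensional over K. -/

import Mathlib

/-- The `J`-preorder on a monoid: `x ≤_J y` iff `x = u * y * v` for some `u, v`. -/
def leJ {M : Type*} [Monoid M] (x y : M) : Prop := ∃ u v : M, x = u * y * v

/-- A monoid is `J`-trivial if `M x M = M y M` implies `x = y`. -/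
def JTrivial (M : Type*) [Monoid M] : Prop :=
  ∀ x y : M, {z : M | ∃ u v : M, z = u * x * v} = {z : M | ∃ u v : M, z = u * y * v} → x = y

open Classical

/-- `N` realizes the right module `S_x`: it has a nonzero vector `ε` spanning it over `K`
(where `K` acts through the central embedding `K → K[M]`), on which each `y ∈ M` acts by
`ε · y = ε` if `x * y = x` and `ε · y = 0` otherwise.  Right `K[M]`-modules are formalized as
modules over the opposite algebra. -/
def IsSx (K : Type*) {M : Type*} [Field K] [Monoid M] (x : M)
    (N : Type*) [AddCommGroup N] [Module (MonoidAlgebra K M)ᵐᵒᵖ N] : Prop :=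
  ∃ ε : N, ε ≠ 0 ∧
    (∀ w : N, ∃ c : K,
      w = MulOpposite.op (algebraMap K (MonoidAlgebra K M) c) • ε) ∧
    (∀ y : M, MulOpposite.op ((MonoidAlgebra.of K M) y) • ε
        = if x * y = x then ε else 0)

/- ### Auxiliary lemmas -/

theorem leJ_refl {M : Type*} [Monoid M] (x : M) : leJ x x := ⟨1, 1, by simp⟩

theorem leJ_trans {M : Type*} [Monoid M] {a b c : M} (h1 : leJ a b) (h2 : leJ b c) :
    leJ a c := by
  obtain ⟨u, v, rfl⟩ := h1
  obtain ⟨p, q, rfl⟩ := h2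
  exact ⟨u * p, q * v, by simp [mul_assoc]⟩

theorem leJ_antisymm {M : Type*} [Monoid M] (hJ : JTrivial M) {a b : M}
    (h1 : leJ a b) (h2 : leJ b a) : a = b := by
  apply hJ
  ext z
  simp only [Set.mem_setOf_eq]
  constructor
  · rintro ⟨u, v, rfl⟩
    obtain ⟨p, q, hb⟩ := h1
    exact ⟨u * p, q * v, by rw [hb]; simp [mul_assoc]⟩
  · rintro ⟨u, v, rfl⟩
    obtain ⟨p, q, hb⟩ := h2
    exact ⟨u * p, q * v, by rw [hb]; simp [mul_assoc]⟩

theorem fix_mul_iff {M : Type*} [Monoid M] (hJ : JTrivial M) (x y z : M) :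
    x * (y * z) = x ↔ (x * y = x ∧ x * z = x) := by
  constructor
  · intro h
    have hxy : x * y = x := by
      apply leJ_antisymm hJ ⟨1, y, by simp⟩ ⟨1, z, by simp [mul_assoc, h]⟩
    refine ⟨hxy, ?_⟩
    calc x * z = (x * y) * z := by rw [hxy]
    _ = x * (y * z) := by rw [mul_assoc]
    _ = x := h
  · rintro ⟨h1, h2⟩
    rw [← mul_assoc, h1, h2]

/-- The character of `M` in `K` attached to `x : M`. -/
noncomputable def chiHom (K : Type*) [Field K] {M : Type*} [Monoid M] (hJ : JTrivial M)
    (x : M) : M →* K where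
  toFun y := if x * y = x then 1 else 0
  map_one' := by simp
  map_mul' y z := by
    by_cases hy : x * y = x <;> by_cases hz : x * z = x <;>
      simp [fix_mul_iff hJ x y z, hy, hz]

/-- The induced ring hom from the opposite monoid algebra to `K`. -/
noncomputable def chiOp (K : Type*) [Field K] {M : Type*} [Monoid M] (hJ : JTrivial M)
    (x : M) : (MonoidAlgebra K M)ᵐᵒᵖ →+* K :=
  RingHom.fromOpposite ((MonoidAlgebra.lift K K M (chiHom K hJ x)) : MonoidAlgebra K M →+* K)
    (fun _ _ => mul_comm _ _)

/-- Let `K` be a field and `M` a finite `J`-trivial monoid.  For each `x ∈ M` there is a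
(one-dimensional) right `K[M]`-module `S_x` with basis vector `ε_x` and action
`ε_x · y = ε_x` if `x * y = x` and `0` otherwise; moreover every simple right `K[M]`-module
is isomorphic to some `S_x` (hence one-dimensional over `K`). -/
theorem simple_modules_of_JTrivial (K : Type u) [Field K] {M : Type u} [Monoid M]
    [Fintype M] (hJ : JTrivial M) :
    (∀ x : M, ∃ (N : Type u) (iN : AddCommGroup N)
      (_ : @Module (MonoidAlgebra K M)ᵐᵒᵖ N _ iN.toAddCommMonoid), IsSx K x N) ∧
    (∀ (N : Type u) [AddCommGroup N] [Module (MonoidAlgebra K M)ᵐᵒᵖ N],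
      IsSimpleModule (MonoidAlgebra K M)ᵐᵒᵖ N → ∃ x : M, IsSx K x N) := by
  constructor
  · -- construction of `S_x`
    intro x
    letI mod : Module (MonoidAlgebra K M)ᵐᵒᵖ K := Module.compHom K (chiOp K hJ x)
    have hsmul : ∀ (a : MonoidAlgebra K M) (w : K),
        MulOpposite.op a • w = MonoidAlgebra.lift K K M (chiHom K hJ x) a * w := fun _ _ => rfl
    refine ⟨K, inferInstance, mod, 1, one_ne_zero, ?_, ?_⟩
    · intro w
      refine ⟨w, ?_⟩
      rw [hsmul]
      simp
    · intro y
      rw [hsmul]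
      simp only [MonoidAlgebra.lift_of, mul_one]
      by_cases h : x * y = x <;> simp [chiHom, h]
  · -- classification of simple modules
    intro N _ _ hsimple
    classical
    have hnt : ∃ w : N, w ≠ 0 := by
      have := IsSimpleModule.nontrivial (MonoidAlgebra K M)ᵐᵒᵖ N
      exact exists_ne 0
    set Kill : M → Prop := fun y => ∀ w : N, MulOpposite.op ((MonoidAlgebra.of K M) y) • w = 0
      with hKill
    set C : Finset M := Finset.univ.filter fun y => ¬ Kill y with hCdef
    have hC : C.Nonempty := by
      obtain ⟨w, hw⟩ := hnt
      refine ⟨1, ?_⟩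
      simp only [hCdef, Finset.mem_filter, Finset.mem_univ, true_and]
      intro h
      have := h w
      simp only [map_one, MulOpposite.op_one, one_smul] at this
      exact hw this
    obtain ⟨x, hxC, hmin⟩ :=
      C.exists_min_image (fun y => (Finset.univ.filter (fun z => leJ z y)).card) hC
    have hxK : ¬ Kill x := by
      simpa [hCdef] using hxC
    have hbelow : ∀ z : M, x * z ≠ x → Kill (x * z) := by
      intro z hz
      by_contra hk
      have hmem : x * z ∈ C := by simp [hCdef, hk]
      have hle := hmin _ hmem
      have hsub : (Finset.univ.filter (fun a => leJ a (x * z)))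
          ⊂ (Finset.univ.filter (fun a => leJ a x)) := by
        constructor
        · intro a ha
          simp only [Finset.mem_filter, Finset.mem_univ, true_and] at ha ⊢
          exact leJ_trans ha ⟨1, z, by simp⟩
        · intro hsup
          have hx1 : x ∈ Finset.univ.filter (fun a => leJ a x) := by
            simp [leJ_refl]
          have hx2 := hsup hx1
          simp only [Finset.mem_filter, Finset.mem_univ, true_and] at hx2
          exact hz (leJ_antisymm hJ ⟨1, z, by simp⟩ hx2)
      exact absurd hle (not_le.mpr (Finset.card_lt_card hsub))
    obtain ⟨w, hw⟩ := not_forall.mp hxK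
    refine ⟨x, MulOpposite.op ((MonoidAlgebra.of K M) x) • w, hw, ?_, ?_⟩
    · -- spanning
      have hact : ∀ y : M, MulOpposite.op ((MonoidAlgebra.of K M) y) •
          (MulOpposite.op ((MonoidAlgebra.of K M) x) • w)
          = if x * y = x then MulOpposite.op ((MonoidAlgebra.of K M) x) • w else 0 := by
        intro y
        have key : MulOpposite.op ((MonoidAlgebra.of K M) y) •
            (MulOpposite.op ((MonoidAlgebra.of K M) x) • w)
            = MulOpposite.op ((MonoidAlgebra.of K M) (x * y)) • w := by
          rw [← mul_smul, ← MulOpposite.op_mul, ← map_mul]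
        by_cases h : x * y = x
        · rw [if_pos h, key, h]
        · rw [if_neg h, key, hbelow y h w]
      set ε : N := MulOpposite.op ((MonoidAlgebra.of K M) x) • w with hε
      have hspan : Submodule.span (MonoidAlgebra K M)ᵐᵒᵖ {ε} = ⊤ := by
        rcases hsimple.eq_bot_or_eq_top (Submodule.span (MonoidAlgebra K M)ᵐᵒᵖ {ε}) with h | h
        · exfalso
          have : ε ∈ Submodule.span (MonoidAlgebra K M)ᵐᵒᵖ {ε} :=
            Submodule.mem_span_singleton_self ε
          rw [h] at this
          exact hw (by simpa using this)
        · exact h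
      have main : ∀ a : MonoidAlgebra K M, ∃ c : K,
          MulOpposite.op a • ε = MulOpposite.op (algebraMap K (MonoidAlgebra K M) c) • ε := by
        intro a
        induction a using MonoidAlgebra.induction_linear with
        | zero => exact ⟨0, by simp⟩
        | add f g hf hg =>
          obtain ⟨c, hc⟩ := hf
          obtain ⟨d, hd⟩ := hg
          refine ⟨c + d, ?_⟩
          rw [MulOpposite.op_add, add_smul, hc, hd, map_add, MulOpposite.op_add, add_smul]
        | single y c =>
          have hfac : (MonoidAlgebra.single y c : MonoidAlgebra K M)
              = (MonoidAlgebra.of K M) y * algebraMap K (MonoidAlgebra K M) c := by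
            rw [← Algebra.commutes]
            exact MonoidAlgebra.single_eq_algebraMap_mul_of y c
          rw [hfac, MulOpposite.op_mul, mul_smul, hact y]
          by_cases h : x * y = x
          · rw [if_pos h]
            exact ⟨c, rfl⟩
          · rw [if_neg h]
            exact ⟨0, by simp⟩
      intro v
      have hv : v ∈ Submodule.span (MonoidAlgebra K M)ᵐᵒᵖ {ε} := by
        rw [hspan]; trivial
      obtain ⟨r, hr⟩ := Submodule.mem_span_singleton.mp hv
      obtain ⟨c, hc⟩ := main r.unop
      refine ⟨c, ?_⟩
      rw [← hr, ← MulOpposite.op_unop r, hc]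
    · -- the action formula
      intro y
      have key : MulOpposite.op ((MonoidAlgebra.of K M) y) •
          (MulOpposite.op ((MonoidAlgebra.of K M) x) • w)
          = MulOpposite.op ((MonoidAlgebra.of K M) (x * y)) • w := by
        rw [← mul_smul, ← MulOpposite.op_mul, ← map_mul]
      by_cases h : x * y = x
      · rw [if_pos h, key, h]
      · rw [if_neg h, key, hbelow y h w]
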